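/- Let γ with 1 < γ ≤ 5/3 and θ = (γ−1)/2 ∈ (0, 1/3]. For 1 < γ ≤ 5/3 and 0 ≤ t ≤ 1, with X = t^θ: 4f''(t) ≥ (3γ−1)(γ−1)·t^(θ−1)·(3(5γ−3)X² − 8γX + 3 − γ), where f(t) = (5γ−3)t^(3θ+1) − 2(3γ−1)t^(2θ+1) + γ(3−γ)t^(θ+1) − (3−γ)(γ−1)t^θ + 2(γ−1). -/

import Mathlib

theorem stmt_17 (γ θ : ℝ) (hγ1 : 1 < γ) (hγ2 : γ ≤ 5/3) (hθ : θ = (γ-1)/2)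
    (f : ℝ → ℝ)
    (hf : f = fun t : ℝ => (5*γ-3) * t ^ (3*θ+1) - 2*(3*γ-1) * t ^ (2*θ+1)
      + γ*(3-γ) * t ^ (θ+1) - (3-γ)*(γ-1) * t ^ θ + 2*(γ-1)) :
    ∀ t : ℝ, 0 < t → t ≤ 1 →
      (3*γ-1)*(γ-1) * t ^ (θ-1) * (3*(5*γ-3) * (t ^ θ)^2 - 8*γ * t ^ θ + 3 - γ)
        ≤ 4 * deriv (deriv f) t := by
  intro t ht ht1
  set g : ℝ → ℝ := fun s => (5*γ-3)*((3*θ+1) * s^(3*θ)) - 2*(3*γ-1)*((2*θ+1)*s^(2*θ))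
      + γ*(3-γ)*((θ+1)*s^θ) - (3-γ)*(γ-1)*(θ*s^(θ-1)) with hg
  have H : ∀ s : ℝ, 0 < s → HasDerivAt f (g s) s := by
    intro s hs
    rw [hf]
    have h1 := (Real.hasDerivAt_rpow_const (x := s) (p := 3*θ+1) (Or.inl hs.ne')).const_mul (5*γ-3)
    have h2 := (Real.hasDerivAt_rpow_const (x := s) (p := 2*θ+1) (Or.inl hs.ne')).const_mul (2*(3*γ-1))
    have h3 := (Real.hasDerivAt_rpow_const (x := s) (p := θ+1) (Or.inl hs.ne')).const_mul (γ*(3-γ))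
    have h4 := (Real.hasDerivAt_rpow_const (x := s) (p := θ) (Or.inl hs.ne')).const_mul ((3-γ)*(γ-1))
    have := (((h1.sub h2).add h3).sub h4).add_const (2*(γ-1))
    have heq : g s = (5*γ-3) * ((3*θ+1) * s ^ ((3*θ+1)-1)) - 2*(3*γ-1) * ((2*θ+1) * s ^ ((2*θ+1)-1))
        + γ*(3-γ) * ((θ+1) * s ^ ((θ+1)-1)) - (3-γ)*(γ-1) * (θ * s ^ (θ-1)) := by
      rw [hg, show (3*θ+1)-1 = 3*θ from by ring, show (2*θ+1)-1 = 2*θ from by ring,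
        show (θ+1)-1 = θ from by ring]
    rw [heq]
    convert this using 1
    all_goals rfl
  have hev : deriv f =ᶠ[nhds t] g := by
    filter_upwards [isOpen_Ioi.mem_nhds ht] with s hs using (H s hs).deriv
  have hgd : HasDerivAt g ((5*γ-3)*((3*θ+1)*(3*θ) * t^(3*θ-1))
      - 2*(3*γ-1)*((2*θ+1)*(2*θ)*t^(2*θ-1))
      + γ*(3-γ)*((θ+1)*θ*t^(θ-1)) - (3-γ)*(γ-1)*(θ*((θ-1)*t^(θ-2)))) t := by
    have h1 := ((Real.hasDerivAt_rpow_const (x := t) (p := 3*θ) (Or.inl ht.ne')).const_mul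
      ((5*γ-3)*(3*θ+1)))
    have h2 := ((Real.hasDerivAt_rpow_const (x := t) (p := 2*θ) (Or.inl ht.ne')).const_mul
      (2*(3*γ-1)*(2*θ+1)))
    have h3 := ((Real.hasDerivAt_rpow_const (x := t) (p := θ) (Or.inl ht.ne')).const_mul
      (γ*(3-γ)*(θ+1)))
    have h4 := ((Real.hasDerivAt_rpow_const (x := t) (p := θ-1) (Or.inl ht.ne')).const_mul
      ((3-γ)*(γ-1)*θ))
    have := ((h1.sub h2).add h3).sub h4
    have hfun : g = fun x : ℝ => (5*γ-3)*(3*θ+1) * x ^ (3*θ) - 2*(3*γ-1)*(2*θ+1) * x ^ (2*θ)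
        + γ*(3-γ)*(θ+1) * x ^ θ - (3-γ)*(γ-1)*θ * x ^ (θ-1) := by
      rw [hg]; funext x; ring
    rw [hfun]
    convert this using 1
    · rfl
    · rfl
    · rfl
    rw [show (θ-1)-1 = θ-2 from by ring]
    ring
  have key : deriv (deriv f) t = (5*γ-3)*((3*θ+1)*(3*θ) * t^(3*θ-1))
      - 2*(3*γ-1)*((2*θ+1)*(2*θ)*t^(2*θ-1))
      + γ*(3-γ)*((θ+1)*θ*t^(θ-1)) - (3-γ)*(γ-1)*(θ*((θ-1)*t^(θ-2))) := by
    rw [hev.deriv_eq]; exact hgd.deriv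
  rw [key]
  have e1 : t^(3*θ-1) = t^θ * t^θ * t^(θ-1) := by
    rw [← Real.rpow_add ht, ← Real.rpow_add ht]; ring_nf
  have e2 : t^(2*θ-1) = t^θ * t^(θ-1) := by
    rw [← Real.rpow_add ht]; ring_nf
  have hp : (0:ℝ) < t^(θ-1) := Real.rpow_pos_of_pos ht _
  have hq : (0:ℝ) < t^(θ-2) := Real.rpow_pos_of_pos ht _
  have h3γ : (0:ℝ) ≤ 3 - γ := by linarith
  have h1γ : (0:ℝ) ≤ γ - 1 := by linarith
  rw [e1, e2]
  subst hθ
  nlinarith [mul_nonneg (mul_nonneg (mul_nonneg (mul_nonneg h3γ h1γ) h1γ) h1γ) hp.le,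
    mul_nonneg (mul_nonneg (mul_nonneg (mul_nonneg h3γ h3γ) h1γ) h1γ) hq.le]
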